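/- Let R be a finite commutative local ring with maximal ideal M, let π: R → R/M be the quotient map, and let A be an m×n matrix over R. Then the McCoy rank of A equals the rank of π(A) over the field R/M. -/

import Mathlib

open Matrix

/-- The ideal generated by all `k × k` minors of a matrix. -/
def minorsIdeal {R : Type*} [CommRing R] {m n : ℕ}
    (A : Matrix (Fin m) (Fin n) R) (k : ℕ) : Ideal R :=
  Ideal.span {d | ∃ (r : Fin k → Fin m) (c : Fin k → Fin n), d = (A.submatrix r c).det}

/-- The McCoy rank of a matrix: the largest `k` such that the annihilator of the
ideal of `k × k` minors is zero. -/
noncomputable def mccoyRank {R : Type*} [CommRing R] {m n : ℕ}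
    (A : Matrix (Fin m) (Fin n) R) : ℕ :=
  sSup {k | (minorsIdeal A k).annihilator = ⊥}

section Aux

variable {K : Type*} [Field K]

/-- A square matrix over a field of full rank has nonzero determinant. -/
lemma aux_det_ne_zero_of_rank_eq {k : ℕ} (C : Matrix (Fin k) (Fin k) K)
    (h : C.rank = k) : C.det ≠ 0 := by
  intro hdet
  obtain ⟨v, hv, hmv⟩ := (Matrix.exists_mulVec_eq_zero_iff).mpr hdet
  have hvker : v ∈ LinearMap.ker C.mulVecLin := by
    rw [LinearMap.mem_ker, Matrix.mulVecLin_apply]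
    exact hmv
  have hker : LinearMap.ker C.mulVecLin ≠ ⊥ := fun hb => hv (by simpa [hb] using hvker)
  have hsum := LinearMap.finrank_range_add_finrank_ker C.mulVecLin
  rw [Module.finrank_pi] at hsum
  have hkerpos : 0 < Module.finrank K (LinearMap.ker C.mulVecLin) := by
    rcases Nat.eq_zero_or_pos (Module.finrank K (LinearMap.ker C.mulVecLin)) with h0 | h0
    · exact absurd (Submodule.finrank_eq_zero.mp h0) hker
    · exact h0
  have : C.rank + Module.finrank K (LinearMap.ker C.mulVecLin) = k := by
    simpa [Matrix.rank, Fintype.card_fin] using hsum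
  omega

/-- The rank of any submatrix is at most the rank of the matrix. -/
lemma aux_rank_submatrix_le {m n k l : ℕ} (B : Matrix (Fin m) (Fin n) K)
    (r : Fin k → Fin m) (c : Fin l → Fin n) :
    (B.submatrix r c).rank ≤ B.rank := by
  have hL : ((1 : Matrix (Fin m) (Fin m) K).submatrix r id) * B = B.submatrix r id := by
    ext i j
    rw [Matrix.mul_apply]
    simp [Matrix.one_apply, ite_mul, Finset.sum_ite_eq]
  have hR : (B.submatrix r id) * ((1 : Matrix (Fin n) (Fin n) K).submatrix id c)
      = B.submatrix r c := by
    ext i j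
    rw [Matrix.mul_apply]
    simp [Matrix.one_apply, mul_ite, Finset.sum_ite_eq']
  rw [← hR, ← hL]
  exact (Matrix.rank_mul_le_left _ _).trans (Matrix.rank_mul_le_right _ _)

/-- If some `k × k` submatrix has nonzero determinant, the rank is at least `k`. -/
lemma aux_le_rank_of_det_ne_zero {m n k : ℕ} (B : Matrix (Fin m) (Fin n) K)
    (r : Fin k → Fin m) (c : Fin k → Fin n) (h : (B.submatrix r c).det ≠ 0) :
    k ≤ B.rank := by
  have hu : IsUnit (B.submatrix r c) :=
    (Matrix.isUnit_iff_isUnit_det _).mpr (isUnit_iff_ne_zero.mpr h)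
  have h1 : (B.submatrix r c).rank = k := by
    simpa [Fintype.card_fin] using Matrix.rank_of_isUnit _ hu
  calc k = (B.submatrix r c).rank := h1.symm
    _ ≤ B.rank := aux_rank_submatrix_le B r c

/-- One can select `rank`-many columns forming a full-rank submatrix. -/
lemma aux_exists_cols {m n k : ℕ} (B : Matrix (Fin m) (Fin n) K) (hk : B.rank = k) :
    ∃ c : Fin k → Fin n, (B.submatrix id c).rank = k := by
  classical
  obtain ⟨s, hst, hspan, hli⟩ := exists_linearIndependent K (Set.range Bᵀ)
  have hsfin : s.Finite := ((Set.finite_range Bᵀ).subset hst)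
  haveI : Fintype s := hsfin.fintype
  have hcard : Fintype.card s = k := by
    have h1 : Module.finrank K (Submodule.span K s) = s.toFinset.card :=
      finrank_span_set_eq_card hli
    have h2 : B.rank = Module.finrank K (Submodule.span K s) := by
      rw [Matrix.rank_eq_finrank_span_cols, hspan]
      rfl
    rw [← hk, h2, h1, Set.toFinset_card]
  have e : Fin k ≃ s := (finCongr hcard.symm).trans (Fintype.equivFin s).symm
  choose f hf using fun x : s => hst x.2
  refine ⟨fun i => f (e i), ?_⟩
  have hcols : ∀ i, (B.submatrix id fun i => f (e i))ᵀ i = ((e i : s) : Fin m → K) := by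
    intro i
    ext j
    have := congrFun (hf (e i)) j
    simpa [Matrix.submatrix_apply, Matrix.transpose_apply] using this
  have hrange : Set.range (B.submatrix id fun i => f (e i))ᵀ = s := by
    ext x
    constructor
    · rintro ⟨i, rfl⟩
      rw [hcols i]; exact (e i).2
    · intro hx
      exact ⟨e.symm ⟨x, hx⟩, by rw [hcols]; simp⟩
  rw [Matrix.rank_eq_finrank_span_cols,
    show Set.range (B.submatrix id fun i => f (e i)).col = s from hrange]
  have h1 : Module.finrank K (Submodule.span K s) = s.toFinset.card :=
    finrank_span_set_eq_card hli
  rw [h1, Set.toFinset_card, hcard]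

/-- Over a field, a matrix of rank `k` has a `k × k` submatrix with nonzero determinant. -/
lemma aux_exists_det_ne_zero {m n k : ℕ} (B : Matrix (Fin m) (Fin n) K) (hk : B.rank = k) :
    ∃ (r : Fin k → Fin m) (c : Fin k → Fin n), (B.submatrix r c).det ≠ 0 := by
  obtain ⟨c, hc⟩ := aux_exists_cols B hk
  have ht : (B.submatrix id c)ᵀ.rank = k := by rw [Matrix.rank_transpose, hc]
  obtain ⟨r, hr⟩ := aux_exists_cols _ ht
  refine ⟨r, c, ?_⟩
  have hC : ((B.submatrix id c)ᵀ.submatrix id r).det ≠ 0 :=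
    aux_det_ne_zero_of_rank_eq _ hr
  have heq : ((B.submatrix id c)ᵀ.submatrix id r)ᵀ = B.submatrix r c := by
    rw [Matrix.transpose_submatrix, Matrix.transpose_transpose, Matrix.submatrix_submatrix]
    rfl
  rw [← heq, Matrix.det_transpose]
  exact hC

end Aux

/-- If `I ≤ M` with `M` nilpotent in a nontrivial commutative ring,
the annihilator of `I` is nonzero. -/
lemma aux_annihilator_ne_bot {R : Type*} [CommRing R] [Nontrivial R] (I M : Ideal R)
    (hIM : I ≤ M) (hM : IsNilpotent M) : I.annihilator ≠ ⊥ := by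
  classical
  have hex : ∃ t, M ^ t = ⊥ := hM
  have h0 : M ^ Nat.find hex = ⊥ := Nat.find_spec hex
  have ht0 : Nat.find hex ≠ 0 := by
    intro h
    rw [h, pow_zero, Ideal.one_eq_top] at h0
    exact top_ne_bot h0
  have hprev : M ^ (Nat.find hex - 1) ≠ ⊥ := Nat.find_min hex (by omega)
  obtain ⟨x, hxmem, hx0⟩ := (Submodule.ne_bot_iff _).mp hprev
  intro hann
  apply hx0
  have hxann : x ∈ I.annihilator := by
    rw [Submodule.mem_annihilator]
    intro y hy
    have : x * y ∈ M ^ (Nat.find hex - 1) * M := Ideal.mul_mem_mul hxmem (hIM hy)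
    rw [← pow_succ, Nat.sub_add_cancel (Nat.one_le_iff_ne_zero.mpr ht0), h0] at this
    rw [smul_eq_mul]
    simpa using this
  rw [hann] at hxann
  simpa using hxann

theorem mccoyRank_eq_rank_residue {R : Type*} [CommRing R] [IsLocalRing R] [Fintype R]
    {m n : ℕ} (A : Matrix (Fin m) (Fin n) R) :
    mccoyRank A = (A.map (IsLocalRing.residue R)).rank := by
  classical
  set π := IsLocalRing.residue R
  set B := A.map π with hB
  set r := B.rank with hr
  -- the residue of a minor is the corresponding minor of B
  have hminor : ∀ (k : ℕ) (rr : Fin k → Fin m) (cc : Fin k → Fin n),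
      π ((A.submatrix rr cc).det) = (B.submatrix rr cc).det := by
    intro k rr cc
    rw [RingHom.map_det, hB, Matrix.submatrix_map]
    rfl
  -- r belongs to the set
  have hrmem : (minorsIdeal A r).annihilator = ⊥ := by
    obtain ⟨rr, cc, hdet⟩ := aux_exists_det_ne_zero B rfl
    have hu : IsUnit ((A.submatrix rr cc).det) := by
      rw [← IsLocalRing.residue_ne_zero_iff_isUnit]
      rw [hminor r rr cc]
      exact hdet
    have htop : minorsIdeal A r = ⊤ :=
      Ideal.eq_top_of_isUnit_mem _ (Ideal.subset_span ⟨rr, cc, rfl⟩) hu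
    apply le_antisymm _ bot_le
    intro x hx
    rw [Submodule.mem_annihilator] at hx
    have := hx 1 (htop ▸ Submodule.mem_top)
    simpa using this
  -- every element of the set is at most r
  have hbound : ∀ k, (minorsIdeal A k).annihilator = ⊥ → k ≤ r := by
    intro k hk
    by_contra hlt
    push_neg at hlt
    have hsub : minorsIdeal A k ≤ IsLocalRing.maximalIdeal R := by
      rw [minorsIdeal, Ideal.span_le]
      rintro d ⟨rr, cc, rfl⟩
      rw [SetLike.mem_coe, ← IsLocalRing.residue_eq_zero_iff]
      by_contra hne
      have : k ≤ r := by
        apply aux_le_rank_of_det_ne_zero B rr cc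
        rw [← hminor k rr cc]
        exact hne
      omega
    have hnil : IsNilpotent (IsLocalRing.maximalIdeal R) := by
      rw [← IsLocalRing.jacobson_eq_maximalIdeal (⊥ : Ideal R) bot_ne_top]
      exact IsArtinianRing.isNilpotent_jacobson_bot
    exact aux_annihilator_ne_bot _ _ hsub hnil hk
  -- conclude
  have hne : {k | (minorsIdeal A k).annihilator = ⊥}.Nonempty := ⟨r, hrmem⟩
  have hbdd : BddAbove {k | (minorsIdeal A k).annihilator = ⊥} :=
    ⟨r, fun k hk => hbound k hk⟩
  exact le_antisymm (csSup_le hne fun k hk => hbound k hk) (le_csSup hbdd hrmem)
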